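/- Let Λ be an A-lattice in a finite-dimensional normed K_∞-vector space V and ω_1,…,ω_d a greedy successive-minimum sequence. Then for each i, Λ ∩ span_{K_∞}(ω_1,…,ω_i) = A-span(ω_1,…,ω_i); in particular Λ = A-span(ω_1,…,ω_d), i.e. the successive minima form an A-basis of Λ. -/

import Mathlib

open Filter
open scoped Classical

/-- The absolute value `|f| = σ^(ord f)` on the Laurent series field `K∞ = k((π))`,
`π = 1/T`; for a polynomial `f` in `T` this is `σ^(-deg f)`. -/
noncomputable def absLS (k : Type*) [Field k] (σ : ℝ) (f : LaurentSeries k) : ℝ :=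
  if f = 0 then 0 else σ ^ f.order

/-- The embedding of `A = k[T]` into `K∞ = k((π))`, sending `T` to `π⁻¹`. -/
noncomputable def polyToLS (k : Type*) [Field k] : Polynomial k →ₐ[k] LaurentSeries k :=
  Polynomial.aeval (HahnSeries.single (1 : ℤ) (1 : k))⁻¹

/-- The `A`-lattice spanned by the vectors `b i`: all `A`-linear combinations of the `b i`. -/
def latticeA (k : Type*) [Field k] {V : Type*} [AddCommGroup V]
    [Module (LaurentSeries k) V] {d : ℕ} (b : Fin d → V) : Set V :=
  {x | ∃ a : Fin d → Polynomial k, x = ∑ i, polyToLS k (a i) • b i}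

namespace Stmt15Aux

variable {k : Type*} [Field k]

lemma sum_coeff {α : Type*} (s : Finset α) (f : α → LaurentSeries k) (m : ℤ) :
    (∑ a ∈ s, f a).coeff m = ∑ a ∈ s, (f a).coeff m := by
  induction s using Finset.cons_induction with
  | empty => simp
  | cons a s ha ih => rw [Finset.sum_cons, Finset.sum_cons, HahnSeries.coeff_add, ih]

lemma inv_single_one :
    (HahnSeries.single (1 : ℤ) (1 : k))⁻¹ = HahnSeries.single (-1 : ℤ) (1 : k) := by
  refine inv_eq_of_mul_eq_one_right ?_
  rw [HahnSeries.single_mul_single]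
  simp

lemma pow_single_neg_one (n : ℕ) :
    (HahnSeries.single (-1 : ℤ) (1 : k)) ^ n = HahnSeries.single (-(n : ℤ)) (1 : k) := by
  rw [HahnSeries.single_pow, one_pow]
  congr 1
  simp

lemma smul_single (c : k) (a : ℤ) :
    c • (HahnSeries.single a (1 : k)) = HahnSeries.single a c := by
  ext m
  rw [HahnSeries.coeff_smul, HahnSeries.coeff_single, HahnSeries.coeff_single]
  split_ifs <;> simp

lemma polyToLS_eq (p : Polynomial k) :
    polyToLS k p = ∑ n ∈ Finset.range (p.natDegree + 1),
      HahnSeries.single (-(n : ℤ)) (p.coeff n) := by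
  simp only [polyToLS]
  rw [Polynomial.aeval_def, Polynomial.eval₂_eq_sum_range]
  refine Finset.sum_congr rfl fun n _ => ?_
  rw [inv_single_one, pow_single_neg_one]
  have halg : (algebraMap k (LaurentSeries k)) (p.coeff n)
      = HahnSeries.single (0 : ℤ) (p.coeff n) := by
    rw [HahnSeries.algebraMap_apply', ← PowerSeries.C_eq_algebraMap, HahnSeries.ofPowerSeries_C,
      HahnSeries.C_apply]
  rw [halg, HahnSeries.single_mul_single, zero_add, mul_one]

lemma polyToLS_coeff_neg (p : Polynomial k) (n : ℕ) :
    (polyToLS k p).coeff (-(n : ℤ)) = p.coeff n := by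
  rw [polyToLS_eq, sum_coeff]
  rw [Finset.sum_eq_single n]
  · exact HahnSeries.coeff_single_same _ _
  · intro b _ hb
    exact HahnSeries.coeff_single_of_ne (by omega)
  · intro hn
    rw [HahnSeries.coeff_single_same]
    refine Polynomial.coeff_eq_zero_of_natDegree_lt ?_
    simp only [Finset.mem_range, Nat.lt_succ_iff, not_le] at hn
    exact hn

/-- The polynomial part of a Laurent series. -/
noncomputable def polyPart (f : LaurentSeries k) : Polynomial k :=
  ∑ n ∈ Finset.range ((-f.order).toNat + 1), Polynomial.monomial n (f.coeff (-(n : ℤ)))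

lemma polyPart_coeff (f : LaurentSeries k) (n : ℕ) :
    (polyPart f).coeff n =
      if n ≤ (-f.order).toNat then f.coeff (-(n : ℤ)) else 0 := by
  rw [polyPart, Polynomial.finset_sum_coeff]
  simp only [Polynomial.coeff_monomial]
  rw [Finset.sum_ite_eq' (Finset.range ((-f.order).toNat + 1)) n
    (fun b => f.coeff (-(b : ℤ)))]
  simp [Finset.mem_range, Nat.lt_succ_iff]

lemma polyPart_zero : polyPart (0 : LaurentSeries k) = 0 := by
  simp [polyPart]

lemma frac_coeff (f : LaurentSeries k) (m : ℤ) (hm : m ≤ 0) :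
    (f - polyToLS k (polyPart f)).coeff m = 0 := by
  have hmn : m = -(((-m).toNat : ℕ) : ℤ) := by omega
  rw [HahnSeries.coeff_sub, hmn, polyToLS_coeff_neg, polyPart_coeff]
  split_ifs with h
  · exact sub_self _
  · rw [sub_zero]
    apply HahnSeries.coeff_eq_zero_of_lt_order
    have := Int.self_le_toNat (-f.order)
    omega

lemma absLS_frac_le {σ : ℝ} (hσ0 : 0 < σ) (hσ1 : σ < 1) (f : LaurentSeries k) :
    absLS k σ (f - polyToLS k (polyPart f)) ≤ σ := by
  simp only [absLS]
  split_ifs with h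
  · exact hσ0.le
  · have hord : 1 ≤ (f - polyToLS k (polyPart f)).order := by
      by_contra hlt
      push_neg at hlt
      exact (mt HahnSeries.coeff_order_eq_zero.mp h) (frac_coeff f _ (by omega))
    calc σ ^ (f - polyToLS k (polyPart f)).order ≤ σ ^ (1 : ℤ) :=
          zpow_le_zpow_right_of_le_one₀ hσ0 hσ1.le hord
      _ = σ := zpow_one σ

variable {V : Type*} [AddCommGroup V] [Module (LaurentSeries k) V] {d : ℕ}

lemma lat_sum_mem (b : Fin d → V) {ι : Type*} (s : Finset ι) (f : ι → V)
    (h : ∀ j ∈ s, f j ∈ latticeA k b) : (∑ j ∈ s, f j) ∈ latticeA k b := by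
  induction s using Finset.cons_induction with
  | empty => exact ⟨0, by simp⟩
  | cons a s ha ih =>
    obtain ⟨a1, h1⟩ := h a (Finset.mem_cons_self _ _)
    obtain ⟨a2, h2⟩ := ih fun j hj => h j (Finset.mem_cons_of_mem hj)
    refine ⟨a1 + a2, ?_⟩
    rw [Finset.sum_cons, h1, h2, ← Finset.sum_add_distrib]
    exact Finset.sum_congr rfl fun j _ => by rw [Pi.add_apply, map_add, add_smul]

lemma lat_smul_mem (b : Fin d → V) (p : Polynomial k) {x : V} (hx : x ∈ latticeA k b) :
    polyToLS k p • x ∈ latticeA k b := by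
  obtain ⟨a, rfl⟩ := hx
  refine ⟨fun i => p * a i, ?_⟩
  rw [Finset.smul_sum]
  exact Finset.sum_congr rfl fun j _ => by rw [map_mul, mul_smul]

lemma lat_sub_mem (b : Fin d → V) {x y : V} (hx : x ∈ latticeA k b)
    (hy : y ∈ latticeA k b) : x - y ∈ latticeA k b := by
  obtain ⟨a1, rfl⟩ := hx
  obtain ⟨a2, rfl⟩ := hy
  refine ⟨a1 - a2, ?_⟩
  rw [← Finset.sum_sub_distrib]
  exact Finset.sum_congr rfl fun j _ => by rw [Pi.sub_apply, map_sub, sub_smul]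

lemma combo_mem (b : Fin d → V) (ω : Fin d → V) (hω : ∀ i, ω i ∈ latticeA k b)
    (a : Fin d → Polynomial k) : (∑ j, polyToLS k (a j) • ω j) ∈ latticeA k b :=
  lat_sum_mem b _ _ fun j _ => lat_smul_mem b _ (hω j)

lemma span_helper (ω : Fin d → V) (c : Fin d → LaurentSeries k) (j₀ : Fin d)
    (hc : c j₀ ≠ 0) (hmax : ∀ j, c j ≠ 0 → j ≤ j₀)
    (h : (∑ j, c j • ω j) ∈ Submodule.span (LaurentSeries k) (ω '' {l | l < j₀})) :
    ω j₀ ∈ Submodule.span (LaurentSeries k) (ω '' {l | l < j₀}) := by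
  set S := Submodule.span (LaurentSeries k) (ω '' {l | l < j₀}) with hS
  have hrest : (∑ j ∈ Finset.univ.erase j₀, c j • ω j) ∈ S := by
    refine Submodule.sum_mem _ fun j hj => ?_
    by_cases h0 : c j = 0
    · rw [h0, zero_smul]; exact Submodule.zero_mem _
    · have hj' : j < j₀ := lt_of_le_of_ne (hmax j h0) (Finset.ne_of_mem_erase hj)
      exact Submodule.smul_mem _ _ (Submodule.subset_span ⟨j, hj', rfl⟩)
  have hsum : c j₀ • ω j₀ =
      (∑ j, c j • ω j) - ∑ j ∈ Finset.univ.erase j₀, c j • ω j := by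
    rw [← Finset.add_sum_erase _ _ (Finset.mem_univ j₀), add_sub_cancel_right]
  have hmem : c j₀ • ω j₀ ∈ S := hsum ▸ Submodule.sub_mem _ h hrest
  have := Submodule.smul_mem S (c j₀)⁻¹ hmem
  rwa [inv_smul_smul₀ hc] at this

end Stmt15Aux

open Stmt15Aux in
/-- For a greedy successive-minimum sequence `ω` of an `A`-lattice `Λ`, the intersection of `Λ`
with the `K∞`-span of `ω₁, …, ω_i` is the `A`-span of `ω₁, …, ω_i`; in particular
`Λ` equals the `A`-span of `ω₁, …, ω_d`. -/
theorem stmt15 {k V : Type*} [Field k] [AddCommGroup V] [Module (LaurentSeries k) V]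
    (σ : ℝ) (hσ0 : 0 < σ) (hσ1 : σ < 1)
    (N : V → ℝ)
    (hN0 : ∀ x : V, N x = 0 ↔ x = 0)
    (hNsmul : ∀ (c : LaurentSeries k) (x : V), N (c • x) = absLS k σ c * N x)
    (hNadd : ∀ x y : V, N (x + y) ≤ max (N x) (N y))
    {d : ℕ}
    (b : Module.Basis (Fin d) (LaurentSeries k) V)
    (ω : Fin d → V)
    (hωmem : ∀ i, ω i ∈ latticeA k b)
    (hωnot : ∀ i, ω i ∉ Submodule.span (LaurentSeries k) (ω '' {j : Fin d | j < i}))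
    (hωmin : ∀ i, ∀ x ∈ latticeA k b,
      x ∉ Submodule.span (LaurentSeries k) (ω '' {j : Fin d | j < i}) → N (ω i) ≤ N x) :
    (∀ i : Fin d,
        latticeA k b ∩ (Submodule.span (LaurentSeries k) (ω '' {j : Fin d | j ≤ i}) : Set V) =
          {x | ∃ a : Fin d → Polynomial k, (∀ j, ¬ j ≤ i → a j = 0) ∧
            x = ∑ j, polyToLS k (a j) • ω j}) ∧
      latticeA k b = latticeA k ω := by
  have hN00 : N 0 = 0 := (hN0 0).mpr rfl
  have hNneg : ∀ x : V, N (-x) = N x := by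
    intro x
    have h1 : (-x) = (-1 : LaurentSeries k) • x := (neg_one_smul _ x).symm
    rw [h1, hNsmul]
    have h2 : absLS k σ (-1 : LaurentSeries k) = 1 := by
      rw [absLS, if_neg (neg_ne_zero.mpr one_ne_zero)]
      rw [HahnSeries.order_neg, HahnSeries.order_one, zpow_zero]
    rw [h2, one_mul]
  have hNnn : ∀ x : V, 0 ≤ N x := by
    intro x
    have h := hNadd x (-x)
    rw [add_neg_cancel, hN00, hNneg, max_self] at h
    exact h
  have hNpos : ∀ x : V, x ≠ 0 → 0 < N x := fun x hx =>
    (hNnn x).lt_of_ne fun h => hx ((hN0 x).mp h.symm)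
  have hNsum : ∀ (s : Finset (Fin d)) (f : Fin d → V) (B : ℝ), 0 ≤ B →
      (∀ j ∈ s, N (f j) ≤ B) → N (∑ j ∈ s, f j) ≤ B := by
    intro s
    induction s using Finset.cons_induction with
    | empty => intro f B hB _; simpa [hN00] using hB
    | cons a s ha ih =>
      intro f B hB h
      rw [Finset.sum_cons]
      exact le_trans (hNadd _ _) (max_le (h a (Finset.mem_cons_self _ _))
        (ih f B hB fun j hj => h j (Finset.mem_cons_of_mem hj)))
  have part1 : ∀ i : Fin d,
      latticeA k b ∩ (Submodule.span (LaurentSeries k) (ω '' {j : Fin d | j ≤ i}) : Set V) =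
        {x | ∃ a : Fin d → Polynomial k, (∀ j, ¬ j ≤ i → a j = 0) ∧
          x = ∑ j, polyToLS k (a j) • ω j} := by
    intro i
    ext x
    simp only [Set.mem_inter_iff, SetLike.mem_coe, Set.mem_setOf_eq]
    constructor
    · rintro ⟨hxΛ, hxsp⟩
      obtain ⟨l, hlsupp, hlx⟩ := (Finsupp.mem_span_image_iff_linearCombination _).mp hxsp
      have hc0 : ∀ j, ¬ j ≤ i → l j = 0 := by
        intro j hj
        by_contra h
        exact hj ((Finsupp.mem_supported _ l).mp hlsupp (Finset.mem_coe.mpr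
          (Finsupp.mem_support_iff.mpr h)))
      have hx : x = ∑ j, l j • ω j := by
        rw [← hlx, Finsupp.linearCombination_apply, Finsupp.sum]
        exact Finset.sum_subset (Finset.subset_univ _)
          (fun j _ hj => by rw [Finsupp.notMem_support_iff.mp hj, zero_smul])
      have hy : (∑ j, (l j - polyToLS k (polyPart (l j))) • ω j) ∈ latticeA k b := by
        have h1 : ∑ j, (l j - polyToLS k (polyPart (l j))) • ω j
            = x - ∑ j, polyToLS k (polyPart (l j)) • ω j := by
          rw [hx, ← Finset.sum_sub_distrib]
          exact Finset.sum_congr rfl fun j _ => by rw [sub_smul]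
        rw [h1]
        exact lat_sub_mem b hxΛ (combo_mem b ω hωmem _)
      have hμ0 : ∀ j, l j - polyToLS k (polyPart (l j)) = 0 := by
        by_contra hne
        push_neg at hne
        obtain ⟨j₁, hj₁⟩ := hne
        set s : Finset (Fin d) :=
          Finset.univ.filter (fun j => l j - polyToLS k (polyPart (l j)) ≠ 0) with hsdef
        have hs : s.Nonempty := ⟨j₁, Finset.mem_filter.mpr ⟨Finset.mem_univ _, hj₁⟩⟩
        set j₀ := s.max' hs with hj₀def
        have hj₀ : l j₀ - polyToLS k (polyPart (l j₀)) ≠ 0 :=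
          (Finset.mem_filter.mp (s.max'_mem hs)).2
        have hmax : ∀ j, (l j - polyToLS k (polyPart (l j))) ≠ 0 → j ≤ j₀ :=
          fun j hj => s.le_max' j (Finset.mem_filter.mpr ⟨Finset.mem_univ _, hj⟩)
        have hω0 : ω j₀ ≠ 0 := fun h => hωnot j₀ (h ▸ Submodule.zero_mem _)
        have hNω : 0 < N (ω j₀) := hNpos _ hω0
        have hynot : (∑ j, (l j - polyToLS k (polyPart (l j))) • ω j) ∉
            Submodule.span (LaurentSeries k) (ω '' {l : Fin d | l < j₀}) :=
          fun h => hωnot j₀ (span_helper ω _ j₀ hj₀ hmax h)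
        have hle := hωmin j₀ _ hy hynot
        have hub : N (∑ j, (l j - polyToLS k (polyPart (l j))) • ω j) ≤ σ * N (ω j₀) := by
          refine hNsum _ _ _ (mul_nonneg hσ0.le (hNnn _)) fun j _ => ?_
          by_cases h0 : l j - polyToLS k (polyPart (l j)) = 0
          · rw [h0, zero_smul, hN00]
            exact mul_nonneg hσ0.le (hNnn _)
          · rw [hNsmul]
            have h1 : absLS k σ (l j - polyToLS k (polyPart (l j))) ≤ σ :=
              absLS_frac_le hσ0 hσ1 _
            have h2 : N (ω j) ≤ N (ω j₀) := by
              refine hωmin j _ (hωmem j₀) fun hsp => hωnot j₀ ?_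
              refine Submodule.span_mono (Set.image_mono ?_) hsp
              exact fun t ht => lt_of_lt_of_le ht (hmax j h0)
            exact mul_le_mul h1 h2 (hNnn _) hσ0.le
        have hcontr := lt_of_le_of_lt (le_trans hle hub)
          (mul_lt_of_lt_one_left hNω hσ1)
        exact lt_irrefl _ hcontr
      refine ⟨fun j => polyPart (l j), fun j hj => ?_, ?_⟩
      · show polyPart (l j) = 0
        rw [hc0 j hj, polyPart_zero]
      · rw [hx]
        refine Finset.sum_congr rfl fun j _ => ?_
        congr 1
        exact sub_eq_zero.mp (hμ0 j)
    · rintro ⟨a, ha0, rfl⟩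
      refine ⟨combo_mem b ω hωmem a, Submodule.sum_mem _ fun j _ => ?_⟩
      by_cases hj : j ≤ i
      · exact Submodule.smul_mem _ _ (Submodule.subset_span ⟨j, hj, rfl⟩)
      · rw [ha0 j hj, map_zero, zero_smul]
        exact Submodule.zero_mem _
  refine ⟨part1, ?_⟩
  apply Set.Subset.antisymm
  · intro x hx
    rcases Nat.eq_zero_or_pos d with hd | hd
    · subst hd
      obtain ⟨a, rfl⟩ := hx
      exact ⟨0, by simp⟩
    · obtain ⟨i, hi⟩ : ∃ i : Fin d, ∀ j : Fin d, j ≤ i :=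
        ⟨⟨d - 1, by omega⟩, fun j => by
          have := j.isLt
          simp only [Fin.le_def]
          omega⟩
      have hset : {j : Fin d | j ≤ i} = Set.univ := Set.eq_univ_of_forall fun j => hi j
      have hli : LinearIndependent (LaurentSeries k) ω := by
        rw [Fintype.linearIndependent_iff]
        intro g hg
        by_contra hne
        push_neg at hne
        obtain ⟨j₁, hj₁⟩ := hne
        set s : Finset (Fin d) := Finset.univ.filter (fun j => g j ≠ 0) with hsdef
        have hs : s.Nonempty := ⟨j₁, Finset.mem_filter.mpr ⟨Finset.mem_univ _, hj₁⟩⟩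
        refine hωnot (s.max' hs) (span_helper ω g (s.max' hs)
          (Finset.mem_filter.mp (s.max'_mem hs)).2
          (fun j hj => s.le_max' j (Finset.mem_filter.mpr ⟨Finset.mem_univ _, hj⟩)) ?_)
        rw [hg]
        exact Submodule.zero_mem _
      have : Nonempty (Fin d) := ⟨⟨0, hd⟩⟩
      have htop : Submodule.span (LaurentSeries k) (ω '' {j : Fin d | j ≤ i}) = ⊤ := by
        rw [hset, Set.image_univ]
        refine hli.span_eq_top_of_card_eq_finrank ?_
        rw [Fintype.card_fin, Module.finrank_eq_card_basis b, Fintype.card_fin]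
      have hx2 : x ∈ latticeA k b ∩
          (Submodule.span (LaurentSeries k) (ω '' {j : Fin d | j ≤ i}) : Set V) :=
        ⟨hx, by rw [htop]; trivial⟩
      rw [part1 i] at hx2
      obtain ⟨a, -, rfl⟩ := hx2
      exact ⟨a, rfl⟩
  · intro x hx
    obtain ⟨a, rfl⟩ := hx
    exact combo_mem b ω hωmem a
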